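/- Let φ be any IFG_N-formula over σ and 𝔄 a σ-structure with universe A. If the meaning ‖φ‖_𝔄 is a perfect double suit (i.e., ‖φ‖_𝔄 = (𝒫(V), 𝒫(^N A \ V)) for some team V), then ‖φ‖_𝔄 = ‖φ_∅‖_𝔄, where φ_∅ is the perfection of φ. -/

import Mathlib

open FirstOrder

/-- A team: a set of valuations `Fin N → A`. -/
abbrev Team (A : Type*) (N : ℕ) := Set (Fin N → A)

/-- A pair of collections of teams. -/
abbrev TPair (A : Type*) (N : ℕ) := Set (Team A N) × Set (Team A N)

/-- A suit: a nonempty collection of teams closed under subsets. -/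
def IsSuit {A : Type*} {N : ℕ} (S : Set (Team A N)) : Prop :=
  S.Nonempty ∧ ∀ ⦃V V' : Team A N⦄, V ∈ S → V' ⊆ V → V' ∈ S

/-- A double suit: a pair of suits whose intersection is `{∅}`. -/
def IsDoubleSuit {A : Type*} {N : ℕ} (X : TPair A N) : Prop :=
  IsSuit X.1 ∧ IsSuit X.2 ∧ X.1 ∩ X.2 = {∅}

/-- The pair `(𝒫(V), 𝒫(^N A \ V))`. -/
def perfPair {A : Type*} {N : ℕ} (V : Team A N) : TPair A N :=
  (Set.powerset V, Set.powerset Vᶜ)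

/-- `a ≈_J b` : the valuations `a` and `b` agree outside of `J`. -/
def AgreeOutside {A : Type*} {N : ℕ} (J : Set (Fin N)) (a b : Fin N → A) : Prop :=
  ∀ i ∉ J, a i = b i

/-- `V = V₁ ∪_J V₂` : `V₁, V₂` form a `J`-saturated disjoint cover of `V`. -/
def CovJ {A : Type*} {N : ℕ} (J : Set (Fin N)) (V V₁ V₂ : Team A N) : Prop :=
  Disjoint V₁ V₂ ∧ V₁ ∪ V₂ = V ∧
  (∀ a ∈ V₁, ∀ b ∈ V, AgreeOutside J a b → b ∈ V₁) ∧
  (∀ a ∈ V₂, ∀ b ∈ V, AgreeOutside J a b → b ∈ V₂)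

/-- `f` is independent of `J` on `V`. -/
def IndepOn {A : Type*} {N : ℕ} (J : Set (Fin N)) (V : Team A N)
    (f : (Fin N → A) → A) : Prop :=
  ∀ a ∈ V, ∀ b ∈ V, AgreeOutside J a b → f a = f b

/-- The `n`-variation of `V` by `f`: `V(n:f) = {a(n:f(a)) : a ∈ V}`. -/
def varF {A : Type*} {N : ℕ} (V : Team A N) (n : Fin N) (f : (Fin N → A) → A) : Team A N :=
  (fun a => Function.update a n (f a)) '' V

/-- `V(n:A) = {a(n:b) : a ∈ V, b ∈ A}`. -/
def varAll {A : Type*} {N : ℕ} (V : Team A N) (n : Fin N) : Team A N :=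
  {c | ∃ a ∈ V, ∃ b : A, c = Function.update a n b}

/-- IFG_N-formulas over the signature `L`: atomic first-order formulas
(equalities and relations between terms in the variables `v_0, …, v_{N-1}`),
closed under `∼ψ`, `ψ₁ ∨_J ψ₂`, and `∃v_n/J ψ`. -/
inductive IFG (L : Language) (N : ℕ) : Type _
  | equal (t₁ t₂ : L.Term (Fin N)) : IFG L N
  | rel {k : ℕ} (R : L.Relations k) (ts : Fin k → L.Term (Fin N)) : IFG L N
  | not (φ : IFG L N) : IFG L N
  | or (J : Set (Fin N)) (φ₁ φ₂ : IFG L N) : IFG L N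
  | ex (n : Fin N) (J : Set (Fin N)) (φ : IFG L N) : IFG L N

/-- Hodges' trump semantics: `Sat A φ true V` means `𝔄 ⊨⁺ φ[V]` (`V` is a trump),
and `Sat A φ false W` means `𝔄 ⊨⁻ φ[W]` (`W` is a cotrump). -/
def Sat {L : Language} {N : ℕ} (A : Type*) [L.Structure A] :
    IFG L N → Bool → Team A N → Prop
  | .equal t₁ t₂, true, V => ∀ a ∈ V, t₁.realize a = t₂.realize a
  | .equal t₁ t₂, false, W => ∀ a ∈ W, t₁.realize a ≠ t₂.realize a
  | .rel R ts, true, V => ∀ a ∈ V, Language.Structure.RelMap R (fun i => (ts i).realize a)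
  | .rel R ts, false, W => ∀ a ∈ W, ¬ Language.Structure.RelMap R (fun i => (ts i).realize a)
  | .not φ, b, V => Sat A φ (!b) V
  | .or J φ₁ φ₂, true, V =>
      ∃ V₁ V₂, CovJ J V V₁ V₂ ∧ Sat A φ₁ true V₁ ∧ Sat A φ₂ true V₂
  | .or _ φ₁ φ₂, false, W => Sat A φ₁ false W ∧ Sat A φ₂ false W
  | .ex n J φ, true, V =>
      ∃ f : (Fin N → A) → A, IndepOn J V f ∧ Sat A φ true (varF V n f)
  | .ex n _ φ, false, W => Sat A φ false (varAll W n)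

/-- The meaning `‖φ‖_𝔄 = ({V : 𝔄 ⊨⁺ φ[V]}, {W : 𝔄 ⊨⁻ φ[W]})`. -/
def meaning {L : Language} {N : ℕ} (A : Type*) [L.Structure A] (φ : IFG L N) :
    TPair A N :=
  ({V | Sat A φ true V}, {W | Sat A φ false W})

/-- An IFG-formula is perfect if all of its slash sets are empty. -/
def IFG.Perfect {L : Language} {N : ℕ} : IFG L N → Prop
  | .equal _ _ => True
  | .rel _ _ => True
  | .not φ => φ.Perfect
  | .or J φ₁ φ₂ => J = ∅ ∧ φ₁.Perfect ∧ φ₂.Perfect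
  | .ex _ J φ => J = ∅ ∧ φ.Perfect

/-- The perfection `φ_∅` of `φ`: replace every slash set by `∅`. -/
def IFG.perfection {L : Language} {N : ℕ} : IFG L N → IFG L N
  | .equal t₁ t₂ => .equal t₁ t₂
  | .rel R ts => .rel R ts
  | .not φ => .not φ.perfection
  | .or _ φ₁ φ₂ => .or ∅ φ₁.perfection φ₂.perfection
  | .ex n _ φ => .ex n ∅ φ.perfection

section Aux

variable {L : Language} {N : ℕ} {A : Type*} [L.Structure A]

lemma agreeOutside_empty {a b : Fin N → A} (h : AgreeOutside (∅ : Set (Fin N)) a b) :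
    a = b := funext fun i => h i (Set.notMem_empty i)

/-- Downward closure of satisfaction. -/
lemma sat_mono {φ : IFG L N} {b : Bool} {V V' : Team A N}
    (h : Sat A φ b V) (hsub : V' ⊆ V) : Sat A φ b V' := by
  induction φ generalizing b V V' with
  | equal t₁ t₂ => cases b <;> exact fun a ha => h a (hsub ha)
  | rel R ts => cases b <;> exact fun a ha => h a (hsub ha)
  | not ψ ih => exact ih h hsub
  | or J φ₁ φ₂ ih₁ ih₂ =>
    cases b with
    | false => exact ⟨ih₁ h.1 hsub, ih₂ h.2 hsub⟩
    | true =>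
      obtain ⟨V₁, V₂, ⟨hdisj, huni, hs₁, hs₂⟩, h₁, h₂⟩ := h
      refine ⟨V₁ ∩ V', V₂ ∩ V', ⟨?_, ?_, ?_, ?_⟩,
        ih₁ h₁ Set.inter_subset_left, ih₂ h₂ Set.inter_subset_left⟩
      · exact hdisj.mono Set.inter_subset_left Set.inter_subset_left
      · rw [← Set.union_inter_distrib_right, huni, Set.inter_eq_right.mpr hsub]
      · exact fun a ha c hc hag => ⟨hs₁ a ha.1 c (hsub hc) hag, hc⟩
      · exact fun a ha c hc hag => ⟨hs₂ a ha.1 c (hsub hc) hag, hc⟩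
  | ex n J φ ih =>
    cases b with
    | false =>
      exact ih h (fun c => fun ⟨a, ha, b', hb⟩ => ⟨a, hsub ha, b', hb⟩)
    | true =>
      obtain ⟨f, hf, hφ⟩ := h
      exact ⟨f, fun a ha c hc hag => hf a (hsub ha) c (hsub hc) hag,
        ih hφ (Set.image_mono hsub)⟩

/-- Satisfaction implies satisfaction of the perfection. -/
lemma sat_perfection {φ : IFG L N} {b : Bool} {V : Team A N}
    (h : Sat A φ b V) : Sat A φ.perfection b V := by
  induction φ generalizing b V with
  | equal t₁ t₂ => exact h
  | rel R ts => exact h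
  | not ψ ih => exact ih h
  | or J φ₁ φ₂ ih₁ ih₂ =>
    cases b with
    | false => exact ⟨ih₁ h.1, ih₂ h.2⟩
    | true =>
      obtain ⟨V₁, V₂, ⟨hdisj, huni, hs₁, hs₂⟩, h₁, h₂⟩ := h
      exact ⟨V₁, V₂, ⟨hdisj, huni,
        fun a ha c hc hag => (agreeOutside_empty hag) ▸ ha,
        fun a ha c hc hag => (agreeOutside_empty hag) ▸ ha⟩, ih₁ h₁, ih₂ h₂⟩
  | ex n J φ ih =>
    cases b with
    | false => exact ih h
    | true =>
      obtain ⟨f, _, hφ⟩ := h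
      exact ⟨f, fun a _ c _ hag => by rw [agreeOutside_empty hag], ih hφ⟩

lemma perfect_perfection (φ : IFG L N) : φ.perfection.Perfect := by
  induction φ with
  | equal t₁ t₂ => trivial
  | rel R ts => trivial
  | not ψ ih => exact ih
  | or J φ₁ φ₂ ih₁ ih₂ => exact ⟨rfl, ih₁, ih₂⟩
  | ex n J φ ih => exact ⟨rfl, ih⟩

lemma sat_or_singleton {J : Set (Fin N)} {φ₁ φ₂ : IFG L N} {a : Fin N → A}
    (h : Sat A (.or J φ₁ φ₂) true {a}) :
    Sat A φ₁ true {a} ∨ Sat A φ₂ true {a} := by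
  obtain ⟨V₁, V₂, ⟨hdisj, huni, -, -⟩, h₁, h₂⟩ := h
  have ha : a ∈ V₁ ∪ V₂ := huni ▸ rfl
  rcases ha with ha | ha
  · exact Or.inl (sat_mono h₁ (fun x hx => Set.mem_singleton_iff.mp hx ▸ ha))
  · exact Or.inr (sat_mono h₂ (fun x hx => Set.mem_singleton_iff.mp hx ▸ ha))

lemma sat_ex_singleton {n : Fin N} {J : Set (Fin N)} {φ : IFG L N} {a : Fin N → A}
    (h : Sat A (.ex n J φ) true {a}) :
    ∃ b : A, Sat A φ true {Function.update a n b} := by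
  obtain ⟨f, -, hφ⟩ := h
  exact ⟨f a, by rwa [varF, Set.image_singleton] at hφ⟩

/-- Determinacy for perfect formulas on singletons. -/
lemma sat_not_both {φ : IFG L N} (hp : φ.Perfect) {a : Fin N → A}
    (ht : Sat A φ true {a}) (hf : Sat A φ false {a}) : False := by
  induction φ generalizing a with
  | equal t₁ t₂ => exact hf a rfl (ht a rfl)
  | rel R ts => exact hf a rfl (ht a rfl)
  | not ψ ih => exact ih hp hf ht
  | or J φ₁ φ₂ ih₁ ih₂ =>
    rcases sat_or_singleton ht with h | h
    · exact ih₁ hp.2.1 h hf.1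
    · exact ih₂ hp.2.2 h hf.2
  | ex n J φ ih =>
    obtain ⟨b, hb⟩ := sat_ex_singleton ht
    have hsub : ({Function.update a n b} : Team A N) ⊆ varAll {a} n :=
      fun c hc => ⟨a, rfl, b, hc⟩
    exact ih hp.2 hb (sat_mono hf hsub)

/-- Upward flatness for perfect formulas. -/
lemma sat_of_forall_singleton {φ : IFG L N} (hp : φ.Perfect) {b : Bool} {V : Team A N}
    (h : ∀ a ∈ V, Sat A φ b {a}) : Sat A φ b V := by
  induction φ generalizing b V with
  | equal t₁ t₂ => cases b <;> exact fun a ha => h a ha a rfl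
  | rel R ts => cases b <;> exact fun a ha => h a ha a rfl
  | not ψ ih => exact ih hp h
  | or J φ₁ φ₂ ih₁ ih₂ =>
    cases b with
    | false => exact ⟨ih₁ hp.2.1 (fun a ha => (h a ha).1), ih₂ hp.2.2 (fun a ha => (h a ha).2)⟩
    | true =>
      obtain ⟨rfl, hp₁, hp₂⟩ := hp
      refine ⟨{a ∈ V | Sat A φ₁ true {a}}, {a ∈ V | ¬ Sat A φ₁ true {a}},
        ⟨?_, ?_, ?_, ?_⟩, ih₁ hp₁ (fun a ha => ha.2),
        ih₂ hp₂ (fun a ha => (sat_or_singleton (h a ha.1)).resolve_left ha.2)⟩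
      · exact Set.disjoint_left.mpr fun a ha ha' => ha'.2 ha.2
      · ext a; by_cases hx : Sat A φ₁ true {a} <;> simp [hx]
      · exact fun a ha c hc hag => (agreeOutside_empty hag) ▸ ha
      · exact fun a ha c hc hag => (agreeOutside_empty hag) ▸ ha
  | ex n J φ ih =>
    cases b with
    | false =>
      refine ih hp.2 (fun c hc => ?_)
      obtain ⟨a, ha, b', rfl⟩ := hc
      exact sat_mono (h a ha) (fun x hx => ⟨a, rfl, b', hx⟩)
    | true =>
      obtain ⟨rfl, hpφ⟩ := hp
      classical
      refine ⟨fun a => if hx : ∃ b' : A, Sat A φ true {Function.update a n b'}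
          then hx.choose else a n,
        fun a _ c _ hag => by rw [agreeOutside_empty hag], ?_⟩
      refine ih hpφ (fun c hc => ?_)
      obtain ⟨a, ha, rfl⟩ := hc
      have hx : ∃ b' : A, Sat A φ true {Function.update a n b'} :=
        sat_ex_singleton (h a ha)
      simp only [dif_pos hx]
      exact hx.choose_spec

end Aux

/-- If the meaning of `φ` is a perfect double suit, then `‖φ‖_𝔄 = ‖φ_∅‖_𝔄`. -/
theorem perfect_meaning_eq_perfection {L : Language} {N : ℕ} (A : Type*)
    [L.Structure A] (φ : IFG L N)
    (h : ∃ V : Team A N, meaning A φ = perfPair V) :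
    meaning A φ = meaning A φ.perfection := by
  obtain ⟨V, hV⟩ := h
  have h1 : ∀ U : Team A N, Sat A φ true U ↔ U ⊆ V := fun U => by
    have := congrArg Prod.fst hV
    simpa [meaning, perfPair, Set.ext_iff] using (Set.ext_iff.mp this U)
  have h2 : ∀ U : Team A N, Sat A φ false U ↔ U ⊆ Vᶜ := fun U => by
    have := congrArg Prod.snd hV
    simpa [meaning, perfPair, Set.ext_iff] using (Set.ext_iff.mp this U)
  rw [hV]
  have hp := perfect_perfection φ
  refine Prod.ext ?_ ?_ <;> ext U <;>
    simp only [meaning, perfPair, Set.mem_setOf_eq, Set.mem_powerset_iff]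
  · constructor
    · intro hU
      exact sat_perfection ((h1 U).mpr hU)
    · intro hU a ha
      by_contra haV
      have hta : Sat A φ.perfection true {a} :=
        sat_mono hU (fun x hx => Set.mem_singleton_iff.mp hx ▸ ha)
      have hfa : Sat A φ.perfection false {a} :=
        sat_mono (sat_perfection ((h2 Vᶜ).mpr subset_rfl))
          (fun x hx => Set.mem_singleton_iff.mp hx ▸ haV)
      exact sat_not_both hp hta hfa
  · constructor
    · intro hU
      exact sat_perfection ((h2 U).mpr hU)
    · intro hU a ha haV
      have hfa : Sat A φ.perfection false {a} :=
        sat_mono hU (fun x hx => Set.mem_singleton_iff.mp hx ▸ ha)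
      have hta : Sat A φ.perfection true {a} :=
        sat_mono (sat_perfection ((h1 V).mpr subset_rfl))
          (fun x hx => Set.mem_singleton_iff.mp hx ▸ haV)
      exact sat_not_both hp hta hfa
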